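/- For all x, y ∈ 𝔹ⁿ (the open unit ball of ℝⁿ), s_{𝔹ⁿ}(x,y) ≥ |x−y|/(|x−y| + 2(1−t)), where t = max{|x|, |y|}. -/

import Mathlib

open Metric Set

/-- The triangular ratio metric `s_G(x,y) = sup_{z ∈ ∂G} |x-y|/(|x-z|+|z-y|)`. -/
noncomputable def triangularRatio {n : ℕ} (G : Set (EuclideanSpace ℝ (Fin n)))
    (x y : EuclideanSpace ℝ (Fin n)) : ℝ :=
  ⨆ z : frontier G, dist x y / (dist x z.1 + dist z.1 y)

/-- Distance to the boundary `d_G(x) = dist(x, ∂G)`. -/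
noncomputable def distBd {n : ℕ} (G : Set (EuclideanSpace ℝ (Fin n)))
    (x : EuclideanSpace ℝ (Fin n)) : ℝ :=
  Metric.infDist x (frontier G)

/-- The distance ratio metric `j_G(x,y) = log(1 + |x-y|/min{d_G(x), d_G(y)})`. -/
noncomputable def distRatio {n : ℕ} (G : Set (EuclideanSpace ℝ (Fin n)))
    (x y : EuclideanSpace ℝ (Fin n)) : ℝ :=
  Real.log (1 + dist x y / min (distBd G x) (distBd G y))

/-- The quantity `p_G(x,y) = |x-y| / √(|x-y|² + 4 d_G(x) d_G(y))`. -/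
noncomputable def pMetric {n : ℕ} (G : Set (EuclideanSpace ℝ (Fin n)))
    (x y : EuclideanSpace ℝ (Fin n)) : ℝ :=
  dist x y / Real.sqrt (dist x y ^ 2 + 4 * distBd G x * distBd G y)

lemma triRatio_bdd {n : ℕ} (G : Set (EuclideanSpace ℝ (Fin n)))
    (x y : EuclideanSpace ℝ (Fin n)) :
    BddAbove (Set.range fun z : frontier G => dist x y / (dist x z.1 + dist z.1 y)) := by
  refine ⟨1, ?_⟩
  rintro r ⟨z, rfl⟩
  exact div_le_one_of_le₀ (dist_triangle x z.1 y) (by positivity)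

lemma triRatio_nonneg {n : ℕ} (G : Set (EuclideanSpace ℝ (Fin n)))
    (x y : EuclideanSpace ℝ (Fin n)) : 0 ≤ triangularRatio G x y :=
  Real.iSup_nonneg fun z => by positivity

lemma triRatio_symm {n : ℕ} (G : Set (EuclideanSpace ℝ (Fin n)))
    (x y : EuclideanSpace ℝ (Fin n)) :
    triangularRatio G x y = triangularRatio G y x := by
  unfold triangularRatio
  congr 1; funext z
  rw [dist_comm x y, dist_comm x z.1, dist_comm z.1 y, add_comm]

lemma aux {n : ℕ} (x y : EuclideanSpace ℝ (Fin n)) (hx : ‖x‖ < 1)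
    (hyx : ‖y‖ ≤ ‖x‖) (hne : x ≠ 0) :
    triangularRatio (Metric.ball (0 : EuclideanSpace ℝ (Fin n)) 1) x y ≥
      ‖x - y‖ / (‖x - y‖ + 2 * (1 - ‖x‖)) := by
  have hxpos : (0:ℝ) < ‖x‖ := norm_pos_iff.mpr hne
  set z : EuclideanSpace ℝ (Fin n) := ‖x‖⁻¹ • x with hzdef
  have hz : z ∈ frontier (Metric.ball (0 : EuclideanSpace ℝ (Fin n)) 1) := by
    rw [frontier_ball (0 : EuclideanSpace ℝ (Fin n)) one_ne_zero,
      mem_sphere_zero_iff_norm, hzdef, norm_smul, norm_inv, norm_norm]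
    field_simp
  have hdxz : dist x z = 1 - ‖x‖ := by
    rw [dist_eq_norm, hzdef]
    have : x - ‖x‖⁻¹ • x = (1 - ‖x‖⁻¹) • x := by
      rw [sub_smul, one_smul]
    rw [this, norm_smul, Real.norm_eq_abs]
    have h1 : (1:ℝ) ≤ ‖x‖⁻¹ := (one_le_inv₀ hxpos).mpr hx.le
    rw [abs_of_nonpos (by linarith)]
    field_simp
    ring
  have key : dist x z + dist z y ≤ ‖x - y‖ + 2 * (1 - ‖x‖) := by
    have h2 : dist z y ≤ dist z x + dist x y := dist_triangle z x y
    rw [dist_comm z x] at h2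
    rw [← dist_eq_norm]
    linarith
  have hd : 0 < dist x z + dist z y := by
    have : 0 < dist x z := by rw [hdxz]; linarith
    have := dist_nonneg (x := z) (y := y)
    linarith
  calc ‖x - y‖ / (‖x - y‖ + 2 * (1 - ‖x‖))
      ≤ dist x y / (dist x z + dist z y) := by
        rw [dist_eq_norm]
        gcongr
    _ ≤ triangularRatio (Metric.ball (0 : EuclideanSpace ℝ (Fin n)) 1) x y :=
        le_ciSup (triRatio_bdd _ x y) (⟨z, hz⟩ : frontier _)

/-- For all `x, y` in the unit ball `𝔹ⁿ`,
`s_{𝔹ⁿ}(x,y) ≥ |x-y| / (|x-y| + 2(1-t))` where `t = max{|x|,|y|}`. -/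
theorem sB_ge_radial_bound {n : ℕ}
    (x y : EuclideanSpace ℝ (Fin n)) (hx : ‖x‖ < 1) (hy : ‖y‖ < 1) :
    triangularRatio (Metric.ball (0 : EuclideanSpace ℝ (Fin n)) 1) x y ≥
      ‖x - y‖ / (‖x - y‖ + 2 * (1 - max ‖x‖ ‖y‖)) := by
  by_cases hxy : x = y
  · subst hxy
    simp only [sub_self, norm_zero, zero_div]
    exact triRatio_nonneg _ _ _
  · rcases le_total ‖y‖ ‖x‖ with h | h
    · have hne : x ≠ 0 := by
        rintro rfl
        have h0 : ‖y‖ = 0 := le_antisymm (by simpa using h) (norm_nonneg _)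
        exact hxy (norm_eq_zero.mp h0).symm
      rw [max_eq_left h]
      exact aux x y hx h hne
    · have hne : y ≠ 0 := by
        rintro rfl
        have h0 : ‖x‖ = 0 := le_antisymm (by simpa using h) (norm_nonneg _)
        exact hxy (norm_eq_zero.mp h0)
      rw [max_eq_right h, triRatio_symm, norm_sub_rev]
      exact aux y x hy h hne
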